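/- arXiv:1706.06456 — 3 statements merged into one kernel-verified Lean document; each statement's English description precedes it below -/
import Mathlib

section
/- A triangulation of a convex polygon π with n ≥ 4 vertices all of whose interior edges are incident to a single vertex (a comb) has eccentricity exactly n − 3 in the flip-graph of π. -/
/-!
Combinatorial model of a convex polygon with `n` vertices, labeled by `Fin n`
in clockwise cyclic order.
-/

/-- `c` lies strictly inside the clockwise arc going from `a` to `b`. -/
def Between (n : ℕ) (a c b : Fin n) : Prop :=
  0 < (c - a).val ∧ (c - a).val < (b - a).val

/-- Two edges on the polygon cross: their endpoints strictly interleave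
in the clockwise cyclic order. -/
def Cross (n : ℕ) (e f : Finset (Fin n)) : Prop :=
  ∃ a b c d : Fin n, e = {a, b} ∧ f = {c, d} ∧ Between n a c b ∧ Between n b d a

/-- The vertex immediately following `i` clockwise. -/
def nextV (n : ℕ) (i : Fin n) : Fin n :=
  ⟨(i.val + 1) % n, Nat.mod_lt _ i.pos⟩

/-- Boundary edges of the polygon: the pairs of cyclically consecutive vertices. -/
def IsBoundary (n : ℕ) (e : Finset (Fin n)) : Prop :=
  ∃ i : Fin n, e = {i, nextV n i}

/-- `E` is a triangulation of the convex (sub)polygon on the vertex set `W`: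
an inclusion-maximal set of pairwise non-crossing edges on `W`. -/
def IsTriangulationOn (n : ℕ) (W : Finset (Fin n)) (E : Finset (Finset (Fin n))) : Prop :=
  (∀ e ∈ E, e ⊆ W) ∧ (∀ e ∈ E, e.card = 2) ∧
    (∀ e ∈ E, ∀ f ∈ E, ¬ Cross n e f) ∧
    (∀ e : Finset (Fin n), e ⊆ W → e.card = 2 → (∀ f ∈ E, ¬ Cross n e f) → e ∈ E)

/-- A triangulation of the convex polygon with `n` vertices. -/
structure Triangulation (n : ℕ) where
  edges : Finset (Finset (Fin n))
  isTri : IsTriangulationOn n Finset.univ edges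

theorem Triangulation.edges_injective (n : ℕ) :
    Function.Injective (Triangulation.edges (n := n)) := by
  rintro ⟨e, he⟩ ⟨f, hf⟩ h
  dsimp at h
  subst h
  rfl

/-- The flip-graph of the polygon: two triangulations are adjacent exactly when
they differ by a single edge. -/
def flipGraph (n : ℕ) : SimpleGraph (Triangulation n) where
  Adj T U := T ≠ U ∧ (T.edges \ U.edges).card = 1 ∧ (U.edges \ T.edges).card = 1
  symm := ⟨fun T U h => ⟨h.1.symm, h.2.2, h.2.1⟩⟩
  loopless := ⟨fun T h => h.1 rfl⟩

noncomputable instance (n : ℕ) : Fintype (Triangulation n) :=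
  Fintype.ofInjective Triangulation.edges (Triangulation.edges_injective n)

open Classical in
/-- The number of interior edges of `T` incident to the vertex `v`. -/
noncomputable def interiorDeg (n : ℕ) (T : Triangulation n) (v : Fin n) : ℕ :=
  (T.edges.filter fun e => v ∈ e ∧ ¬ IsBoundary n e).card

/-- `T` has an ear in `v`: no interior edge of `T` is incident to `v`. -/
def HasEar (n : ℕ) (T : Triangulation n) (v : Fin n) : Prop :=
  ∀ e ∈ T.edges, ¬ IsBoundary n e → v ∉ e

/-- The eccentricity of `T` in the flip-graph: the maximum of `d(T,U)` over all
triangulations `U`. -/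
noncomputable def eccentricity (n : ℕ) (T : Triangulation n) : ℕ :=
  Finset.univ.sup fun U : Triangulation n => (flipGraph n).dist T U

/-- The monotone relabeling of the vertices of the polygon after the deletion of
the vertex `a`. -/
def collapse (n : ℕ) (a v : Fin (n + 2)) : Fin (n + 1) :=
  ⟨if v.val < a.val then v.val else v.val - 1, by
    have := v.isLt; have := a.isLt; split <;> omega⟩

/-- The edge set of the triangulation `T∖a` obtained by deleting the vertex `a` from a
triangulation with edge set `E`: remove the boundary edge `{a, a+1}`, replace `a` by
`a+1` in every remaining edge, and relabel the remaining vertices monotonically. -/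
def deleteEdges (n : ℕ) (a : Fin (n + 2)) (E : Finset (Finset (Fin (n + 2)))) :
    Finset (Finset (Fin (n + 1))) :=
  (E.erase {a, a + 1}).image fun e =>
    e.image fun v => collapse n a (if v = a then a + 1 else v)

/-- `c` is an apex of a triangle of `X` on the boundary edge `{a,b}`. -/
def ApexOf (n : ℕ) (X : Triangulation n) (a b c : Fin n) : Prop :=
  c ≠ a ∧ c ≠ b ∧ ({a, c} : Finset (Fin n)) ∈ X.edges ∧ ({b, c} : Finset (Fin n)) ∈ X.edges

/-- The flip between the adjacent triangulations `X` and `Y` is incident to `{a,b}`: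
it affects the triangle containing `{a,b}`. -/
def FlipIncident (n : ℕ) (X Y : Triangulation n) (a b : Fin n) : Prop :=
  ∃ c : Fin n, (ApexOf n X a b c ∧ ¬ ApexOf n Y a b c) ∨
    (ApexOf n Y a b c ∧ ¬ ApexOf n X a b c)

open Classical in
/-- The number of flips incident to `{a,b}` along the walk `p` in the flip-graph. -/
noncomputable def flipsIncident {n : ℕ} {T U : Triangulation n}
    (p : (flipGraph n).Walk T U) (a b : Fin n) : ℕ :=
  (p.darts.filter fun d => decide (FlipIncident n d.toProd.1 d.toProd.2 a b)).length

open Classical in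
/-- `a 0, …, a (k-1)` is a shelling of `T` at `v`: an ordering of the vertices not
joined to `v` by an edge of `T` such that, for every `i`, the edges of `T` incident
to none of `a i, …, a (k-1)` form a triangulation of a convex polygon. -/
def IsShelling (n k : ℕ) (T : Triangulation n) (v : Fin n) (a : Fin k → Fin n) : Prop :=
  Function.Injective a ∧
    (∀ w : Fin n, (∃ i, a i = w) ↔ w ≠ v ∧ ({v, w} : Finset (Fin n)) ∉ T.edges) ∧
    ∀ i : Fin k,
      IsTriangulationOn n (Finset.univ.filter fun w => ∀ j, i ≤ j → w ≠ a j)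
        (T.edges.filter fun e => ∀ j, i ≤ j → a j ∉ e)

/-- `a i` is incident to at least two interior edges of `U` whose other vertex is not
among `a i, …, a (k-1)`. -/
def GoodAt (n k : ℕ) (U : Triangulation n) (a : Fin k → Fin n) (i : Fin k) : Prop :=
  ∃ e₁ e₂ : Finset (Fin n), e₁ ∈ U.edges ∧ e₂ ∈ U.edges ∧ e₁ ≠ e₂ ∧
    ¬ IsBoundary n e₁ ∧ ¬ IsBoundary n e₂ ∧ a i ∈ e₁ ∧ a i ∈ e₂ ∧
    (∀ w ∈ e₁, w ≠ a i → ∀ j, i ≤ j → w ≠ a j) ∧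
    (∀ w ∈ e₂, w ≠ a i → ∀ j, i ≤ j → w ≠ a j)

/-- The set `Ω(T,v)`: triangulations `U` with an ear in `v` such that, for some
shelling `a` of `T` at `v`, every `a i` is incident to at least two interior edges of
`U` whose other vertex is not among `a i, …, a (k-1)`. -/
def Omega (n k : ℕ) (T : Triangulation n) (v : Fin n) : Set (Triangulation n) :=
  {U | HasEar n U v ∧ ∃ a : Fin k → Fin n, IsShelling n k T v a ∧ ∀ i, GoodAt n k U a i}

/-- The set `Ω̃(T,a,b)`: triangulations `U` such that every interior edge shared by `T`
and `U` is incident to `a` or to `b`, and every vertex on the left of `(a,b)` is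
incident to at least two interior edges of `U`. -/
def OmegaTilde (n : ℕ) (T : Triangulation n) (a b : Fin n) : Set (Triangulation n) :=
  {U | (∀ e ∈ T.edges, e ∈ U.edges → ¬ IsBoundary n e → a ∈ e ∨ b ∈ e) ∧
    ∀ c : Fin n, Between n a c b → 2 ≤ interiorDeg n U c}

/-- `(a,b,c)` is a clockwise-oriented central triangle of `T`: the oriented edges
`(a,b)`, `(b,c)` and `(c,a)` have length at most `n/2` and `{a,b}`, `{b,c}`, `{a,c}`
are edges of `T`. -/
def CentralTriangle (n : ℕ) (T : Triangulation n) (a b c : Fin n) : Prop :=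
  2 * (b - a).val ≤ n ∧ 2 * (c - b).val ≤ n ∧ 2 * (a - c).val ≤ n ∧
    ({a, b} : Finset (Fin n)) ∈ T.edges ∧ ({b, c} : Finset (Fin n)) ∈ T.edges ∧
    ({a, c} : Finset (Fin n)) ∈ T.edges

namespace Stmt9

def BtwN (p q r : ℕ) : Prop := (p < q ∧ q < r) ∨ (r < p ∧ p < q) ∨ (q < r ∧ r < p)

lemma fin_sub_val {n : ℕ} (x y : Fin n) :
    (x - y).val = if y.val ≤ x.val then x.val - y.val else n + x.val - y.val := by
  have hx := x.isLt; have hy := y.isLt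
  rw [Fin.sub_def]
  show (n - y.val + x.val) % n = _
  split_ifs with h
  · have h1 : n - y.val + x.val = n + (x.val - y.val) := by omega
    rw [h1, Nat.add_mod_left, Nat.mod_eq_of_lt (by omega)]
  · rw [Nat.mod_eq_of_lt (by omega)]
    omega

lemma btw_aux {n : ℕ} (P Q R : Fin n) :
    (0 < (Q - P).val ∧ (Q - P).val < (R - P).val) ↔ BtwN P.val Q.val R.val := by
  rw [fin_sub_val Q P, fin_sub_val R P]
  have := P.isLt; have := Q.isLt; have := R.isLt
  unfold BtwN
  split_ifs <;> omega

lemma between_iff {n : ℕ} (v x y z : Fin n) :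
    Between n x y z ↔ BtwN ((x - v).val) ((y - v).val) ((z - v).val) := by
  haveI : NeZero n := ⟨v.pos.ne'⟩
  have h1 : y - x = (y - v) - (x - v) := (sub_sub_sub_cancel_right y x v).symm
  have h2 : z - x = (z - v) - (x - v) := (sub_sub_sub_cancel_right z x v).symm
  unfold Between
  rw [h1, h2, btw_aux]

lemma pair_eq {α : Type*} [DecidableEq α] {a b c d : α} (h : ({a,b} : Finset α) = {c,d}) :
    (a = c ∧ b = d) ∨ (a = d ∧ b = c) := by
  have ha : a ∈ ({c,d} : Finset α) := by rw [← h]; simp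
  have hb : b ∈ ({c,d} : Finset α) := by rw [← h]; simp
  have hc : c ∈ ({a,b} : Finset α) := by rw [h]; simp
  have hd : d ∈ ({a,b} : Finset α) := by rw [h]; simp
  simp only [Finset.mem_insert, Finset.mem_singleton] at ha hb hc hd
  rcases ha with h1|h1 <;> rcases hb with h2|h2 <;>
    rcases hc with h3|h3 <;> rcases hd with h4|h4 <;> subst_vars <;> tauto

/-- offset injectivity -/
lemma off_inj {n : ℕ} (v : Fin n) {x y : Fin n} (h : (x - v).val = (y - v).val) : x = y := by
  haveI : NeZero n := ⟨v.pos.ne'⟩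
  have := Fin.val_injective h
  exact sub_left_inj.mp this

lemma off_self {n : ℕ} (v : Fin n) : (v - v).val = 0 := by
  haveI : NeZero n := ⟨v.pos.ne'⟩
  simp

lemma off_add {n : ℕ} (v : Fin n) (d : Fin n) : (v + d - v).val = d.val := by
  haveI : NeZero n := ⟨v.pos.ne'⟩
  rw [add_sub_cancel_left]

/-- destructing a cross on a known pair -/
lemma cross_elim {n : ℕ} {e f : Finset (Fin n)} (x y : Fin n) (hx : e = {x, y})
    (h : Cross n e f) : ∃ z w : Fin n, f = {z, w} ∧ Between n x z y ∧ Between n y w x := by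
  obtain ⟨a, b, c, d, he, hf, h1, h2⟩ := h
  rcases pair_eq (hx ▸ he : ({x, y} : Finset (Fin n)) = {a, b}) with ⟨rfl, rfl⟩ | ⟨rfl, rfl⟩
  · exact ⟨c, d, hf, h1, h2⟩
  · exact ⟨d, c, hf.trans (Finset.pair_comm c d), h2, h1⟩

lemma cross_symm {n : ℕ} {e f : Finset (Fin n)} (h : Cross n e f) : Cross n f e := by
  obtain ⟨a, b, c, d, he, hf, h1, h2⟩ := h
  refine ⟨c, d, b, a, hf, he.trans (Finset.pair_comm a b), ?_, ?_⟩ <;>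
  · rw [between_iff a] at h1 h2 ⊢
    have h0 := off_self a
    have := (b - a).isLt; have := (c - a).isLt; have := (d - a).isLt
    unfold BtwN at *
    omega

lemma cross_disjoint {n : ℕ} {e f : Finset (Fin n)} (h : Cross n e f) :
    ∀ x ∈ e, x ∉ f := by
  obtain ⟨a, b, c, d, he, hf, h1, h2⟩ := h
  rw [between_iff a] at h1 h2
  have h0 := off_self a
  have hb := (b - a).isLt; have hc := (c - a).isLt; have hd := (d - a).isLt
  unfold BtwN at h1 h2
  intro x hx hx'
  rw [he] at hx; rw [hf] at hx'
  simp only [Finset.mem_insert, Finset.mem_singleton] at hx hx'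
  have key : ∀ p q : Fin n, p = q → (p - a).val = (q - a).val := fun p q hpq => by rw [hpq]
  rcases hx with rfl | rfl <;> rcases hx' with h' | h' <;> have := key _ _ h' <;> omega

end Stmt9
namespace Stmt9

lemma nextV_eq {n : ℕ} [NeZero n] (i : Fin n) : nextV n i = i + 1 := by
  apply Fin.ext
  show (i.val + 1) % n = ((i + 1 : Fin n)).val
  rw [Fin.add_def]
  show (i.val + 1) % n = (i.val + (1 : Fin n).val) % n
  have h1 : ((1 : Fin n)).val = 1 % n := Fin.val_one' n
  rw [h1, Nat.add_mod i.val 1 n, Nat.mod_eq_of_lt i.isLt]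

lemma add_one_eq_iff {n : ℕ} [NeZero n] (hn : 2 ≤ n) (x y : Fin n) :
    y = x + 1 ↔ (y - x).val = 1 := by
  have h1 : ((1 : Fin n)).val = 1 := (Fin.val_one' n).trans (Nat.mod_eq_of_lt (by omega))
  constructor
  · intro h; rw [h, add_sub_cancel_left]; exact h1
  · intro h
    have h2 : y - x = 1 := Fin.ext (h.trans h1.symm)
    rw [sub_eq_iff_eq_add] at h2
    rw [h2, add_comm]

lemma isBoundary_pair_iff {n : ℕ} [NeZero n] (hn : 2 ≤ n) (x y : Fin n) :
    IsBoundary n {x, y} ↔ (y - x).val = 1 ∨ (x - y).val = 1 := by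
  constructor
  · rintro ⟨i, hi⟩
    rw [nextV_eq] at hi
    rcases pair_eq hi with ⟨rfl, rfl⟩ | ⟨rfl, rfl⟩
    · left; exact (add_one_eq_iff hn x (x+1)).mp rfl
    · right; exact (add_one_eq_iff hn y (y+1)).mp rfl
  · rintro (h | h)
    · exact ⟨x, by rw [nextV_eq, ← (add_one_eq_iff hn x y).mpr h]⟩
    · refine ⟨y, ?_⟩
      rw [nextV_eq, ← (add_one_eq_iff hn y x).mpr h]
      exact Finset.pair_comm x y

lemma not_cross_of_boundary_left {n : ℕ} (hn : 2 ≤ n) {e f : Finset (Fin n)}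
    (hb : IsBoundary n e) : ¬ Cross n e f := by
  rintro ⟨a, b, c, d, rfl, hf, h1, h2⟩
  haveI : NeZero n := ⟨a.pos.ne'⟩
  rw [isBoundary_pair_iff hn] at hb
  obtain ⟨hc1, hc2⟩ := h1
  obtain ⟨hd1, hd2⟩ := h2
  omega

lemma not_cross_of_boundary_right {n : ℕ} (hn : 2 ≤ n) {e f : Finset (Fin n)}
    (hb : IsBoundary n f) : ¬ Cross n e f := fun h =>
  not_cross_of_boundary_left hn hb (cross_symm h)

lemma not_cross_of_mem {n : ℕ} {e f : Finset (Fin n)} (x : Fin n) (hx : x ∈ e) (hx' : x ∈ f) :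
    ¬ Cross n e f := fun h => cross_disjoint h x hx hx'

/-- The central construction lemma: if `{s,t}` is an edge, and `{x,y}` has `x` with offset
strictly inside `(p,q)` and `y` with offset outside `[p,q]`, then they cross. -/
lemma cross_arc {n : ℕ} (v : Fin n) {p q : ℕ} (s t x y : Fin n)
    (hOs : (s - v).val = p) (hOt : (t - v).val = q) (hpq : p < q)
    (hx1 : p < (x - v).val) (hx2 : (x - v).val < q)
    (hy : (y - v).val < p ∨ q < (y - v).val) :
    Cross n {s, t} {x, y} := by
  refine ⟨s, t, x, y, rfl, rfl, ?_, ?_⟩ <;>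
  · rw [between_iff v]
    have := (y - v).isLt; have := (t - v).isLt
    unfold BtwN
    omega

lemma cross_arc' {n : ℕ} (v : Fin n) {p q : ℕ} (s t x y : Fin n)
    (hOs : (s - v).val = p) (hOt : (t - v).val = q) (hpq : p < q)
    (hx1 : p < (x - v).val) (hx2 : (x - v).val < q)
    (hy : (y - v).val < p ∨ q < (y - v).val) :
    Cross n {x, y} {s, t} :=
  cross_symm (cross_arc v s t x y hOs hOt hpq hx1 hx2 hy)

/-- Crossing contradiction against an edge of a triangulation. -/
lemma no_cross_arc {n : ℕ} (U : Triangulation n) (v : Fin n) {p q : ℕ} (s t x y : Fin n)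
    (hst : ({s, t} : Finset (Fin n)) ∈ U.edges) (hxy : ({x, y} : Finset (Fin n)) ∈ U.edges)
    (hOs : (s - v).val = p) (hOt : (t - v).val = q) (hpq : p < q)
    (hx1 : p < (x - v).val) (hx2 : (x - v).val < q)
    (hy : (y - v).val < p ∨ q < (y - v).val) : False :=
  U.isTri.2.2.1 _ hst _ hxy (cross_arc v s t x y hOs hOt hpq hx1 hx2 hy)

end Stmt9
namespace Stmt9

open Finset

noncomputable instance {n : ℕ} : DecidablePred (IsBoundary n) := fun _ => Classical.dec _

noncomputable def fan (n : ℕ) (v : Fin n) : Finset (Finset (Fin n)) :=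
  Finset.univ.filter (fun e => e.card = 2 ∧ (v ∈ e ∨ IsBoundary n e))

lemma mem_fan {n : ℕ} {v : Fin n} {e : Finset (Fin n)} :
    e ∈ fan n v ↔ e.card = 2 ∧ (v ∈ e ∨ IsBoundary n e) := by
  simp [fan]

lemma boundary_card {n : ℕ} (hn : 2 ≤ n) (i : Fin n) :
    ({i, nextV n i} : Finset (Fin n)).card = 2 := by
  haveI : NeZero n := ⟨by omega⟩
  refine Finset.card_pair ?_
  rw [nextV_eq]
  intro h
  have h1 := (add_one_eq_iff hn i (i+1)).mp rfl
  rw [← h, off_self] at h1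
  omega

lemma boundary_mem {n : ℕ} (hn : 2 ≤ n) (U : Triangulation n) {e : Finset (Fin n)}
    (hb : IsBoundary n e) : e ∈ U.edges := by
  obtain ⟨i, rfl⟩ := hb
  exact U.isTri.2.2.2 _ (Finset.subset_univ _) (boundary_card hn i)
    (fun f _ => not_cross_of_boundary_left hn ⟨i, rfl⟩)

lemma fan_isTri {n : ℕ} (hn : 4 ≤ n) (v : Fin n) :
    IsTriangulationOn n Finset.univ (fan n v) := by
  haveI : NeZero n := ⟨by omega⟩
  refine ⟨fun e _ => Finset.subset_univ _, fun e he => (mem_fan.mp he).1, ?_, ?_⟩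
  · -- pairwise non-crossing
    intro e he f hf hcross
    rcases (mem_fan.mp he).2 with hev | heb
    · rcases (mem_fan.mp hf).2 with hfv | hfb
      · exact not_cross_of_mem v hev hfv hcross
      · exact not_cross_of_boundary_right (by omega) hfb hcross
    · exact not_cross_of_boundary_left (by omega) heb hcross
  · -- maximality
    intro e _ hcard hnc
    rw [mem_fan]
    refine ⟨hcard, ?_⟩
    by_contra hcon
    push_neg at hcon
    obtain ⟨hv, hb⟩ := hcon
    obtain ⟨x, y, hxy, rfl⟩ := Finset.card_eq_two.mp hcard
    -- offsets
    have hX := (x - v).isLt; have hY := (y - v).isLt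
    have hx0 : (x - v).val ≠ 0 := fun h => hv (by
      simp only [Finset.mem_insert, Finset.mem_singleton]
      exact Or.inl (off_inj v (h.trans (off_self v).symm)).symm)
    have hy0 : (y - v).val ≠ 0 := fun h => hv (by
      simp only [Finset.mem_insert, Finset.mem_singleton]
      exact Or.inr (off_inj v (h.trans (off_self v).symm)).symm)
    have hxyv : (x - v).val ≠ (y - v).val := fun h => hxy (off_inj v h)
    rw [isBoundary_pair_iff (by omega)] at hb
    push_neg at hb
    have e1 : y - x = (y - v) - (x - v) := (sub_sub_sub_cancel_right y x v).symm
    have e2 : x - y = (x - v) - (y - v) := (sub_sub_sub_cancel_right x y v).symm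
    rcases Nat.lt_or_ge (x - v).val (y - v).val with hlt | hge
    · have hgap : (y - x).val = (y - v).val - (x - v).val := by
        rw [e1, fin_sub_val]; split_ifs <;> omega
      have hg2 : (x - v).val + 2 ≤ (y - v).val := by
        have := hb.1; omega
      have hk : (x - v).val + 1 < n := by omega
      set u := v + (⟨(x - v).val + 1, hk⟩ : Fin n) with hu
      have hOu : (u - v).val = (x - v).val + 1 := off_add v _
      have huf : ({v, u} : Finset (Fin n)) ∈ fan n v := by
        rw [mem_fan]
        refine ⟨Finset.card_pair ?_, Or.inl (Finset.mem_insert_self _ _)⟩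
        intro h
        rw [← h, off_self] at hOu
        omega
      have hc := cross_arc v x y u v (p := (x - v).val) (q := (y - v).val) rfl rfl hlt
        (by omega) (by omega) (Or.inl (by rw [off_self]; omega))
      rw [Finset.pair_comm u v] at hc
      exact hnc _ huf hc
    · have hlt : (y - v).val < (x - v).val := by omega
      have hgap : (x - y).val = (x - v).val - (y - v).val := by
        rw [e2, fin_sub_val]; split_ifs <;> omega
      have hg2 : (y - v).val + 2 ≤ (x - v).val := by
        have := hb.2; omega
      have hk : (y - v).val + 1 < n := by omega
      set u := v + (⟨(y - v).val + 1, hk⟩ : Fin n) with hu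
      have hOu : (u - v).val = (y - v).val + 1 := off_add v _
      have huf : ({v, u} : Finset (Fin n)) ∈ fan n v := by
        rw [mem_fan]
        refine ⟨Finset.card_pair ?_, Or.inl (Finset.mem_insert_self _ _)⟩
        intro h
        rw [← h, off_self] at hOu
        omega
      have hc := cross_arc v y x u v (p := (y - v).val) (q := (x - v).val) rfl rfl hlt
        (by omega) (by omega) (Or.inl (by rw [off_self]; omega))
      rw [Finset.pair_comm u v, Finset.pair_comm y x] at hc
      exact hnc _ huf hc

lemma comb_eq_fan {n : ℕ} (hn : 4 ≤ n) (T : Triangulation n) (v : Fin n)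
    (hcomb : ∀ e ∈ T.edges, ¬ IsBoundary n e → v ∈ e) : T.edges = fan n v := by
  apply Finset.Subset.antisymm
  · intro e he
    rw [mem_fan]
    refine ⟨T.isTri.2.1 e he, ?_⟩
    by_cases hb : IsBoundary n e
    · exact Or.inr hb
    · exact Or.inl (hcomb e he hb)
  · intro e he
    rw [mem_fan] at he
    refine T.isTri.2.2.2 e (Finset.subset_univ _) he.1 (fun f hf hc => ?_)
    rcases he.2 with hev | heb
    · by_cases hfb : IsBoundary n f
      · exact not_cross_of_boundary_right (by omega) hfb hc
      · exact not_cross_of_mem v hev (hcomb f hf hfb) hc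
    · exact not_cross_of_boundary_left (by omega) heb hc

/-- interior fan edges at `v` -/
noncomputable def fanInt (n : ℕ) (v : Fin n) : Finset (Finset (Fin n)) :=
  (Finset.univ.filter (fun u : Fin n =>
      (u - v).val ≠ 0 ∧ (u - v).val ≠ 1 ∧ (u - v).val ≠ n - 1)).image
    (fun u => ({v, u} : Finset (Fin n)))

lemma mem_fanInt {n : ℕ} {v : Fin n} {e : Finset (Fin n)} :
    e ∈ fanInt n v ↔ ∃ u : Fin n, (u - v).val ≠ 0 ∧ (u - v).val ≠ 1 ∧ (u - v).val ≠ n - 1 ∧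
      e = {v, u} := by
  simp only [fanInt, Finset.mem_image, Finset.mem_filter, Finset.mem_univ, true_and]
  constructor
  · rintro ⟨u, ⟨h1, h2, h3⟩, h4⟩; exact ⟨u, h1, h2, h3, h4.symm⟩
  · rintro ⟨u, h1, h2, h3, h4⟩; exact ⟨u, ⟨h1, h2, h3⟩, h4.symm⟩

lemma fanInt_card {n : ℕ} (hn : 4 ≤ n) (v : Fin n) : (fanInt n v).card = n - 3 := by
  haveI : NeZero n := ⟨by omega⟩
  rw [fanInt, Finset.card_image_of_injOn]
  · set w1 := v + (⟨1, by omega⟩ : Fin n) with hw1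
    set w2 := v + (⟨n - 1, by omega⟩ : Fin n) with hw2
    have hO1 : (w1 - v).val = 1 := off_add v _
    have hO2 : (w2 - v).val = n - 1 := off_add v _
    have hOv := off_self v
    have hfilter : (Finset.univ.filter (fun u : Fin n =>
        (u - v).val ≠ 0 ∧ (u - v).val ≠ 1 ∧ (u - v).val ≠ n - 1)) =
        Finset.univ \ {v, w1, w2} := by
      ext u
      simp only [Finset.mem_filter, Finset.mem_univ, true_and, Finset.mem_sdiff,
        Finset.mem_insert, Finset.mem_singleton]
      constructor
      · rintro ⟨h1, h2, h3⟩ (rfl | rfl | rfl)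
        exacts [h1 hOv, h2 hO1, h3 hO2]
      · intro h
        exact ⟨fun he => h (Or.inl (off_inj v (he.trans hOv.symm))),
          fun he => h (Or.inr (Or.inl (off_inj v (he.trans hO1.symm)))),
          fun he => h (Or.inr (Or.inr (off_inj v (he.trans hO2.symm))))⟩
    rw [hfilter, Finset.card_univ_diff]
    have d1 : v ≠ w1 := fun h => by rw [← h, hOv] at hO1; omega
    have d2 : v ≠ w2 := fun h => by rw [← h, hOv] at hO2; omega
    have d3 : w1 ≠ w2 := fun h => by rw [h, hO2] at hO1; omega
    rw [Finset.card_insert_of_notMem (by simp [d1, d2]),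
      Finset.card_insert_of_notMem (by simp [d3]), Finset.card_singleton, Fintype.card_fin]
  · intro u1 h1 u2 h2 h
    rcases pair_eq h with ⟨_, h'⟩ | ⟨h1', h2'⟩
    · exact h'
    · rw [← h1', h2']

lemma off_antisymm {n : ℕ} {v u : Fin n} (h : u ≠ v) :
    (v - u).val + (u - v).val = n := by
  have h1 : (u - v).val ≠ 0 := fun hh => h (off_inj v (hh.trans (off_self v).symm))
  have h2 : (v - u).val ≠ 0 := fun hh => h.symm (off_inj u (hh.trans (off_self u).symm))
  have := u.isLt; have := v.isLt
  rw [fin_sub_val, fin_sub_val] at *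
  split_ifs at * <;> omega

lemma fan_sdiff_subset_fanInt {n : ℕ} (hn : 4 ≤ n) (v : Fin n) (U : Triangulation n) :
    fan n v \ U.edges ⊆ fanInt n v := by
  haveI : NeZero n := ⟨by omega⟩
  intro e he
  rw [Finset.mem_sdiff, mem_fan] at he
  obtain ⟨⟨hcard, hor⟩, hne⟩ := he
  have hbd : ¬ IsBoundary n e := fun hb => hne (boundary_mem (by omega) U hb)
  have hve : v ∈ e := hor.resolve_right hbd
  obtain ⟨x, y, hxy, rfl⟩ := Finset.card_eq_two.mp hcard
  rw [mem_fanInt]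
  simp only [Finset.mem_insert, Finset.mem_singleton] at hve
  have key : ∀ u : Fin n, u ≠ v → ({x, y} : Finset (Fin n)) = {v, u} →
      ∃ u' : Fin n, (u' - v).val ≠ 0 ∧ (u' - v).val ≠ 1 ∧ (u' - v).val ≠ n - 1 ∧
        ({x, y} : Finset (Fin n)) = {v, u'} := by
    intro u hu hequ
    have h0 : (u - v).val ≠ 0 := fun hh => hu (off_inj v (hh.trans (off_self v).symm))
    have hbd' : ¬ IsBoundary n ({v, u} : Finset (Fin n)) := hequ ▸ hbd
    rw [isBoundary_pair_iff (by omega)] at hbd'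
    push_neg at hbd'
    have hsum := off_antisymm hu
    refine ⟨u, h0, hbd'.1, fun hh => hbd'.2 (by omega), hequ⟩
  rcases hve with h | h
  · exact key y (fun hy => hxy (hy.trans h).symm) (by rw [h])
  · exact key x (fun hx => hxy (hx.trans h)) (by rw [h]; exact Finset.pair_comm x y)

lemma fanInt_subset {n : ℕ} (hn : 4 ≤ n) (v w : Fin n) (hOw : (w - v).val = 1) :
    fanInt n v ⊆ fan n v \ fan n w := by
  haveI : NeZero n := ⟨by omega⟩
  intro e he
  rw [mem_fanInt] at he
  obtain ⟨u, h0, h1, h2, rfl⟩ := he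
  have huv : v ≠ u := fun h => h0 (by rw [← h, off_self])
  have hcard : ({v, u} : Finset (Fin n)).card = 2 := Finset.card_pair huv
  have hbd : ¬ IsBoundary n ({v, u} : Finset (Fin n)) := by
    rw [isBoundary_pair_iff (by omega)]
    push_neg
    have hsum := off_antisymm (Ne.symm huv)
    exact ⟨h1, fun hh => h2 (by omega)⟩
  rw [Finset.mem_sdiff, mem_fan, mem_fan]
  refine ⟨⟨hcard, Or.inl (Finset.mem_insert_self _ _)⟩, ?_⟩
  rintro ⟨-, hor⟩
  rcases hor with hwin | hb
  · simp only [Finset.mem_insert, Finset.mem_singleton] at hwin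
    rcases hwin with rfl | rfl
    · rw [off_self] at hOw; omega
    · exact h1 hOw
  · exact hbd hb

lemma sdiff_card_le_walk {n : ℕ} {X U : Triangulation n} (p : (flipGraph n).Walk X U) :
    (X.edges \ U.edges).card ≤ p.length := by
  induction p with
  | nil => simp
  | @cons a b c h p ih =>
    have hsub : a.edges \ c.edges ⊆ (a.edges \ b.edges) ∪ (b.edges \ c.edges) := by
      intro e he
      rw [Finset.mem_sdiff] at he
      rw [Finset.mem_union, Finset.mem_sdiff, Finset.mem_sdiff]
      by_cases hb : e ∈ b.edges
      · exact Or.inr ⟨hb, he.2⟩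
      · exact Or.inl ⟨he.1, hb⟩
    calc (a.edges \ c.edges).card ≤ ((a.edges \ b.edges) ∪ (b.edges \ c.edges)).card :=
          Finset.card_le_card hsub
      _ ≤ (a.edges \ b.edges).card + (b.edges \ c.edges).card := Finset.card_union_le _ _
      _ ≤ 1 + p.length := by
          have := h.2.1
          omega
      _ = (SimpleGraph.Walk.cons h p).length := by
          rw [SimpleGraph.Walk.length_cons]; omega

set_option maxHeartbeats 1000000 in
lemma flip_step {n : ℕ} (hn : 4 ≤ n) (v : Fin n) (U : Triangulation n)
    (hne : (fan n v \ U.edges).Nonempty) :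
    ∃ U' : Triangulation n, (flipGraph n).Adj U U' ∧
      (fan n v \ U'.edges) ⊂ (fan n v \ U.edges) := by
  haveI : NeZero n := ⟨by omega⟩
  classical
  obtain ⟨e0, he0⟩ := hne
  obtain ⟨u, hu0, hu1, hu2, he0u⟩ := mem_fanInt.mp (fan_sdiff_subset_fanInt hn v U he0)
  rw [Finset.mem_sdiff] at he0
  have hUu : ({v, u} : Finset (Fin n)) ∉ U.edges := he0u ▸ he0.2
  have hOv : (v - v).val = 0 := off_self v
  have hμn := (u - v).isLt
  -- the set of neighbour offsets
  set N : Finset ℕ := ((Finset.univ.filter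
    (fun z : Fin n => ({v, z} : Finset (Fin n)) ∈ U.edges ∧ z ≠ v)).image
      (fun z => (z - v).val)) with hN
  have mem_N : ∀ k : ℕ, k ∈ N ↔
      ∃ z : Fin n, ({v, z} : Finset (Fin n)) ∈ U.edges ∧ z ≠ v ∧ (z - v).val = k := by
    intro k
    simp only [hN, Finset.mem_image, Finset.mem_filter, Finset.mem_univ, true_and]
    constructor
    · rintro ⟨z, ⟨h1, h2⟩, h3⟩; exact ⟨z, h1, h2, h3⟩
    · rintro ⟨z, h1, h2, h3⟩; exact ⟨z, ⟨h1, h2⟩, h3⟩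
  have h1N : 1 ∈ N := by
    rw [mem_N]
    obtain ⟨z, hOz⟩ : ∃ z : Fin n, (z - v).val = 1 := ⟨v + ⟨1, by omega⟩, off_add v _⟩
    have hzv : z ≠ v := fun h => by rw [h, hOv] at hOz; omega
    refine ⟨z, ?_, hzv, hOz⟩
    refine boundary_mem (by omega) U ?_
    rw [isBoundary_pair_iff (by omega)]
    exact Or.inl hOz
  have hN1 : n - 1 ∈ N := by
    rw [mem_N]
    obtain ⟨z, hOz⟩ : ∃ z : Fin n, (z - v).val = n - 1 :=
      ⟨v + ⟨n - 1, by omega⟩, off_add v _⟩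
    have hzv : z ≠ v := fun h => by rw [h, hOv] at hOz; omega
    refine ⟨z, ?_, hzv, hOz⟩
    refine boundary_mem (by omega) U ?_
    rw [isBoundary_pair_iff (by omega)]
    right
    have := off_antisymm hzv
    omega
  have hμN : (u - v).val ∉ N := by
    rw [mem_N]
    rintro ⟨z, hz1, hz2, hz3⟩
    exact hUu (by rw [← off_inj v (hz3 : (z - v).val = (u - v).val)]; exact hz1)
  have hNbound : ∀ k ∈ N, 0 < k ∧ k < n := by
    intro k hk
    obtain ⟨z, hz1, hz2, hz3⟩ := (mem_N k).mp hk
    have := (z - v).isLt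
    have hz0 : (z - v).val ≠ 0 := fun h => hz2 (off_inj v (h.trans hOv.symm))
    omega
  have hμ1 : 1 < (u - v).val := by
    have h0 : (u - v).val ≠ 0 := hu0
    omega
  have hμhi : (u - v).val < n - 1 := by omega
  -- consecutive neighbours around the missing offset
  have hNlo_ne : (N.filter (· < (u - v).val)).Nonempty :=
    ⟨1, Finset.mem_filter.mpr ⟨h1N, hμ1⟩⟩
  have hNhi_ne : (N.filter ((u - v).val < ·)).Nonempty :=
    ⟨n - 1, Finset.mem_filter.mpr ⟨hN1, hμhi⟩⟩
  set α := (N.filter (· < (u - v).val)).max' hNlo_ne with hα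
  set β := (N.filter ((u - v).val < ·)).min' hNhi_ne with hβ
  have hα_mem : α ∈ N ∧ α < (u - v).val := by
    have := (N.filter (· < (u - v).val)).max'_mem hNlo_ne
    rw [Finset.mem_filter] at this
    exact ⟨this.1, this.2⟩
  have hβ_mem : β ∈ N ∧ (u - v).val < β := by
    have := (N.filter ((u - v).val < ·)).min'_mem hNhi_ne
    rw [Finset.mem_filter] at this
    exact ⟨this.1, this.2⟩
  have hα_max : ∀ k ∈ N, k < (u - v).val → k ≤ α :=
    fun k hk hkμ => Finset.le_max' (N.filter (· < (u - v).val)) k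
      (Finset.mem_filter.mpr ⟨hk, hkμ⟩)
  have hβ_min : ∀ k ∈ N, (u - v).val < k → β ≤ k :=
    fun k hk hkμ => Finset.min'_le (N.filter ((u - v).val < ·)) k
      (Finset.mem_filter.mpr ⟨hk, hkμ⟩)
  have hgap : ∀ k ∈ N, ¬(α < k ∧ k < β) := by
    rintro k hk ⟨hk1, hk2⟩
    rcases lt_trichotomy k (u - v).val with h | h | h
    · exact absurd (hα_max k hk h) (by omega)
    · exact hμN (h ▸ hk)
    · exact absurd (hβ_min k hk h) (by omega)
  have hα_pos : 0 < α := (hNbound α hα_mem.1).1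
  have hβ_lt : β < n := (hNbound β hβ_mem.1).2
  have hαβ2 : α + 2 ≤ β := by
    have := hα_mem.2; have := hβ_mem.2; omega
  obtain ⟨a, haU, hav, hOa⟩ := (mem_N α).mp hα_mem.1
  obtain ⟨b, hbU, hbv, hOb⟩ := (mem_N β).mp hβ_mem.1
  -- the apex of the triangle on {a,b} away from v
  set S : Finset ℕ := ((Finset.univ.filter
    (fun z : Fin n => ({a, z} : Finset (Fin n)) ∈ U.edges ∧ α < (z - v).val ∧ (z - v).val < β)).image
      (fun z => (z - v).val)) with hS
  have mem_S : ∀ k : ℕ, k ∈ S ↔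
      ∃ z : Fin n, ({a, z} : Finset (Fin n)) ∈ U.edges ∧ α < (z - v).val ∧ (z - v).val < β ∧
        (z - v).val = k := by
    intro k
    simp only [hS, Finset.mem_image, Finset.mem_filter, Finset.mem_univ, true_and]
    constructor
    · rintro ⟨z, ⟨h1, h2, h3⟩, h4⟩; exact ⟨z, h1, h2, h3, h4⟩
    · rintro ⟨z, h1, h2, h3, h4⟩; exact ⟨z, ⟨h1, h2, h3⟩, h4⟩
  have hS_ne : S.Nonempty := by
    refine ⟨α + 1, (mem_S _).mpr ?_⟩
    set z := v + (⟨α + 1, by omega⟩ : Fin n) with hz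
    have hOz : (z - v).val = α + 1 := off_add v _
    refine ⟨z, ?_, by omega, by omega, hOz⟩
    refine boundary_mem (by omega) U ?_
    rw [isBoundary_pair_iff (by omega)]
    left
    have e3 : z - a = (z - v) - (a - v) := (sub_sub_sub_cancel_right z a v).symm
    rw [e3, fin_sub_val, hOa, hOz]
    split_ifs <;> omega
  set γ := S.max' hS_ne with hγ
  have hγS : γ ∈ S := S.max'_mem hS_ne
  obtain ⟨c, hacU, hγ1, hγ2, hOc⟩ := (mem_S γ).mp hγS
  have hγ_max : ∀ z : Fin n, ({a, z} : Finset (Fin n)) ∈ U.edges → α < (z - v).val →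
      (z - v).val < β → (z - v).val ≤ γ :=
    fun z h1 h2 h3 => S.le_max' _ ((mem_S _).mpr ⟨z, h1, h2, h3, rfl⟩)
  have hcv : c ≠ v := fun h => by rw [h, hOv] at hγ1; omega
  -- {a,b} is an edge of U
  have hab : ({a, b} : Finset (Fin n)) ∈ U.edges := by
    refine U.isTri.2.2.2 _ (Finset.subset_univ _) (Finset.card_pair ?_) ?_
    · intro h; rw [h, hOb] at hOa; omega
    · intro f hf hcross
      obtain ⟨z, w, hfzw, h1, h2⟩ := cross_elim a b rfl hcross
      rw [between_iff v, hOa, hOb] at h1 h2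
      have hZn := (z - v).isLt; have hWn := (w - v).isLt
      have hZ : α < (z - v).val ∧ (z - v).val < β := by unfold BtwN at h1; omega
      have hW : β < (w - v).val ∨ (w - v).val < α := by unfold BtwN at h2; omega
      subst hfzw
      rcases hW with hW | hW
      · exact no_cross_arc U v (p := 0) (q := β) v b z w hbU hf hOv hOb (by omega)
          (by omega) (by omega) (Or.inr hW)
      · rcases Nat.eq_zero_or_pos (w - v).val with hW0 | hWpos
        · have hwv : w = v := off_inj v (hW0.trans hOv.symm)
          rw [hwv] at hf
          have : (z - v).val ∈ N := (mem_N _).mpr ⟨z, by rwa [Finset.pair_comm z v] at hf,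
            fun h => by rw [h, hOv] at hZ; omega, rfl⟩
          exact hgap _ this ⟨hZ.1, hZ.2⟩
        · rcases Nat.lt_or_ge (w - v).val α with hWα | hWα
          · exact no_cross_arc U v (p := 0) (q := α) v a w z haU
              (by rwa [Finset.pair_comm z w] at hf) hOv hOa hα_pos hWpos hWα (Or.inr hZ.1)
          · have hwa : w = a := off_inj v (by omega : (w - v).val = (a - v).val)
            exact cross_disjoint hcross a (Finset.mem_insert_self a {b})
              (by rw [hwa]; simp)
  -- {b,c} is an edge of U
  have hbc : ({b, c} : Finset (Fin n)) ∈ U.edges := by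
    refine U.isTri.2.2.2 _ (Finset.subset_univ _) (Finset.card_pair ?_) ?_
    · intro h; rw [h, hOc] at hOb; omega
    · intro f hf hcross
      obtain ⟨z, w, hfzw, h1, h2⟩ := cross_elim b c rfl hcross
      rw [between_iff v, hOb, hOc] at h1 h2
      have hZn := (z - v).isLt; have hWn := (w - v).isLt
      have hW : γ < (w - v).val ∧ (w - v).val < β := by unfold BtwN at h1 h2; omega
      have hZ : β < (z - v).val ∨ (z - v).val < γ := by unfold BtwN at h1 h2; omega
      subst hfzw
      rcases hZ with hZ | hZ
      · exact no_cross_arc U v (p := 0) (q := β) v b w z hbU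
          (by rwa [Finset.pair_comm z w] at hf) hOv hOb (by omega) (by omega) (by omega)
          (Or.inr hZ)
      · rcases Nat.eq_zero_or_pos (z - v).val with hZ0 | hZpos
        · have hzv : z = v := off_inj v (hZ0.trans hOv.symm)
          rw [hzv] at hf
          have : (w - v).val ∈ N := (mem_N _).mpr ⟨w, hf,
            fun h => by rw [h, hOv] at hW; omega, rfl⟩
          exact hgap _ this ⟨by omega, hW.2⟩
        · rcases Nat.lt_or_ge (z - v).val α with hZα | hZα
          · exact no_cross_arc U v (p := 0) (q := α) v a z w haU hf hOv hOa hα_pos hZpos hZα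
              (Or.inr (by omega))
          · rcases Nat.eq_or_lt_of_le hZα with hZα' | hZα'
            · have hza : z = a := off_inj v (by omega : (z - v).val = (a - v).val)
              rw [hza] at hf
              have := hγ_max w hf (by omega) hW.2
              omega
            · rcases Nat.lt_or_ge (z - v).val γ with hZγ | hZγ
              · exact no_cross_arc U v (p := α) (q := γ) a c z w hacU hf hOa hOc (by omega)
                  hZα' hZγ (Or.inr hW.1)
              · have hzc : z = c := off_inj v (by omega : (z - v).val = (c - v).val)
                exact cross_disjoint hcross c
                  (Finset.mem_insert_of_mem (Finset.mem_singleton_self c))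
                  (by rw [← hzc]; simp)
  -- basic distinctness facts
  have hvab : v ∉ ({a, b} : Finset (Fin n)) := by
    simp only [Finset.mem_insert, Finset.mem_singleton]
    rintro (rfl | rfl)
    · rw [hOv] at hOa; omega
    · rw [hOv] at hOb; omega
  have hvc_card : ({v, c} : Finset (Fin n)).card = 2 := Finset.card_pair (Ne.symm hcv)
  have hvcU : ({v, c} : Finset (Fin n)) ∉ U.edges := by
    intro h
    have : (c - v).val ∈ N := (mem_N _).mpr ⟨c, h, hcv, rfl⟩
    exact hgap _ this ⟨by omega, by omega⟩
  have hvc_ne_ab : ({v, c} : Finset (Fin n)) ≠ {a, b} :=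
    fun h => hvab (h ▸ Finset.mem_insert_self v {c})
  -- edges of the new triangulation
  set E' : Finset (Finset (Fin n)) := insert {v, c} (U.edges.erase {a, b}) with hE'
  have hmemE' : ∀ f : Finset (Fin n), f ∈ U.edges → f ≠ {a, b} → f ∈ E' :=
    fun f hf hne => Finset.mem_insert_of_mem (Finset.mem_erase.mpr ⟨hne, hf⟩)
  have hvaE' : ({v, a} : Finset (Fin n)) ∈ E' := hmemE' _ haU
    (fun h => hvab (h ▸ Finset.mem_insert_self v {a}))
  have hvbE' : ({v, b} : Finset (Fin n)) ∈ E' := hmemE' _ hbU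
    (fun h => hvab (h ▸ Finset.mem_insert_self v {b}))
  have hcab : c ∉ ({a, b} : Finset (Fin n)) := by
    simp only [Finset.mem_insert, Finset.mem_singleton]
    rintro (rfl | rfl)
    · rw [hOc] at hOa; omega
    · rw [hOc] at hOb; omega
  have hacE' : ({a, c} : Finset (Fin n)) ∈ E' := hmemE' _ hacU
    (fun h => hcab (h ▸ Finset.mem_insert_of_mem (Finset.mem_singleton_self c)))
  have hbcE' : ({b, c} : Finset (Fin n)) ∈ E' := hmemE' _ hbc
    (fun h => hcab (h ▸ Finset.mem_insert_of_mem (Finset.mem_singleton_self c)))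
  have hvcE' : ({v, c} : Finset (Fin n)) ∈ E' := Finset.mem_insert_self _ _
  have habE' : ({a, b} : Finset (Fin n)) ∉ E' := by
    rw [hE', Finset.mem_insert]
    rintro (h | h)
    · exact hvc_ne_ab h.symm
    · exact (Finset.mem_erase.mp h).1 rfl
  -- the key non-crossing property of the new edge
  have hmain : ∀ f ∈ U.edges, f ≠ ({a, b} : Finset (Fin n)) →
      ¬ Cross n ({v, c} : Finset (Fin n)) f := by
    intro f hf hfab hcross
    obtain ⟨z, w, hfzw, h1, h2⟩ := cross_elim v c rfl hcross
    rw [between_iff v, hOv, hOc] at h1 h2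
    have hZn := (z - v).isLt; have hWn := (w - v).isLt
    have hZ : 0 < (z - v).val ∧ (z - v).val < γ := by unfold BtwN at h1 h2; omega
    have hW : γ < (w - v).val := by unfold BtwN at h1 h2; omega
    subst hfzw
    rcases Nat.lt_or_ge (z - v).val α with hZα | hZα
    · exact no_cross_arc U v (p := 0) (q := α) v a z w haU hf hOv hOa hα_pos hZ.1 hZα
        (Or.inr (by omega))
    · rcases Nat.eq_or_lt_of_le hZα with hZα' | hZα'
      · have hza : z = a := off_inj v (by omega : (z - v).val = (a - v).val)
        rw [hza] at hf
        rcases Nat.lt_or_ge (w - v).val β with hWβ | hWβ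
        · have := hγ_max w hf (by omega) hWβ
          omega
        · rcases Nat.eq_or_lt_of_le hWβ with hWβ' | hWβ'
          · have hwb : w = b := off_inj v (by omega : (w - v).val = (b - v).val)
            exact hfab (by rw [hza, hwb])
          · exact no_cross_arc U v (p := 0) (q := β) v b a w hbU hf hOv hOb (by omega)
              (by omega) (by omega) (Or.inr hWβ')
      · exact no_cross_arc U v (p := α) (q := γ) a c z w hacU hf hOa hOc (by omega) hZα'
          hZ.2 (Or.inr hW)
  -- E' is a triangulation
  have hcards : ∀ e ∈ E', Finset.card e = 2 := by
    intro e he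
    rw [hE', Finset.mem_insert] at he
    rcases he with rfl | he
    · exact hvc_card
    · exact U.isTri.2.1 e (Finset.mem_of_mem_erase he)
  have hnoncross : ∀ e ∈ E', ∀ f ∈ E', ¬ Cross n e f := by
    intro e he f hf
    rw [hE', Finset.mem_insert] at he hf
    rcases he with rfl | he <;> rcases hf with rfl | hf
    · exact not_cross_of_mem v (Finset.mem_insert_self _ _) (Finset.mem_insert_self _ _)
    · exact hmain f (Finset.mem_of_mem_erase hf) (Finset.mem_erase.mp hf).1
    · exact fun h => hmain e (Finset.mem_of_mem_erase he) (Finset.mem_erase.mp he).1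
        (cross_symm h)
    · exact U.isTri.2.2.1 e (Finset.mem_of_mem_erase he) f (Finset.mem_of_mem_erase hf)
  have hmax : ∀ e : Finset (Fin n), e ⊆ Finset.univ → Finset.card e = 2 →
      (∀ f ∈ E', ¬ Cross n e f) → e ∈ E' := by
    intro e hsub hcard hnc
    by_cases hevc : e = ({v, c} : Finset (Fin n))
    · rw [hevc]; exact hvcE'
    have heab : e ≠ ({a, b} : Finset (Fin n)) := by
      rintro rfl
      refine hnc _ hvcE' ?_
      have := cross_arc v (p := α) (q := β) a b c v hOa hOb (by omega) (by omega) (by omega)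
        (Or.inl (by omega))
      rwa [Finset.pair_comm c v] at this
    refine hmemE' e ?_ heab
    refine U.isTri.2.2.2 e hsub hcard ?_
    intro f hfU
    by_cases hfab : f = ({a, b} : Finset (Fin n))
    · subst hfab
      intro hcross
      obtain ⟨z, w, hezw, h1, h2⟩ := cross_elim a b rfl (cross_symm hcross)
      rw [between_iff v, hOa, hOb] at h1 h2
      have hZn := (z - v).isLt; have hWn := (w - v).isLt
      have hZ : α < (z - v).val ∧ (z - v).val < β := by unfold BtwN at h1 h2; omega
      have hW : β < (w - v).val ∨ (w - v).val < α := by unfold BtwN at h1 h2; omega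
      rcases hW with hW | hW
      · refine hnc _ hvbE' ?_
        have := cross_arc' v (p := 0) (q := β) v b z w hOv hOb (by omega) (by omega)
          (by omega) (Or.inr hW)
        rwa [← hezw] at this
      · rcases Nat.eq_zero_or_pos (w - v).val with hW0 | hWpos
        · have hwv : w = v := off_inj v (hW0.trans hOv.symm)
          rcases Nat.lt_or_ge (z - v).val γ with hZγ | hZγ
          · refine hnc _ hacE' ?_
            have := cross_arc' v (p := α) (q := γ) a c z w hOa hOc (by omega) hZ.1 hZγ
              (Or.inl (by rw [hwv, hOv]; omega))
            rwa [← hezw] at this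
          · rcases Nat.eq_or_lt_of_le hZγ with hZγ' | hZγ'
            · have hzc : z = c := off_inj v (by omega : (z - v).val = (c - v).val)
              rw [hezw, hzc, hwv, Finset.pair_comm c v] at hevc
              exact hevc rfl
            · refine hnc _ hbcE' ?_
              have := cross_arc' v (p := γ) (q := β) c b z w hOc hOb (by omega) hZγ' hZ.2
                (Or.inl (by rw [hwv, hOv]; omega))
              rw [Finset.pair_comm c b] at this
              rwa [← hezw] at this
        · rcases Nat.lt_or_ge (w - v).val α with hWα | hWα
          · refine hnc _ hvaE' ?_
            have := cross_arc' v (p := 0) (q := α) v a w z hOv hOa hα_pos hWpos hWα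
              (Or.inr hZ.1)
            rw [Finset.pair_comm w z] at this
            rwa [← hezw] at this
          · have hwa : w = a := off_inj v (by omega : (w - v).val = (a - v).val)
            refine cross_disjoint (cross_symm hcross) a (Finset.mem_insert_self a {b}) ?_
            rw [hezw, ← hwa]
            simp
    · exact hnc f (hmemE' f hfU hfab)
  set U' : Triangulation n :=
    ⟨E', fun e _ => Finset.subset_univ _, hcards, hnoncross, hmax⟩ with hU'
  have hd1 : U.edges \ U'.edges = {({a, b} : Finset (Fin n))} := by
    ext e
    simp only [Finset.mem_sdiff, Finset.mem_singleton]
    constructor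
    · rintro ⟨heU, heE'⟩
      by_contra hne'
      exact heE' (hmemE' e heU hne')
    · rintro rfl
      exact ⟨hab, habE'⟩
  have hd2 : U'.edges \ U.edges = {({v, c} : Finset (Fin n))} := by
    ext e
    simp only [Finset.mem_sdiff, Finset.mem_singleton]
    constructor
    · rintro ⟨heE', heU⟩
      have heE2 : e ∈ insert ({v, c} : Finset (Fin n)) (U.edges.erase {a, b}) := heE'
      rcases Finset.mem_insert.mp heE2 with rfl | he
      · rfl
      · exact absurd (Finset.mem_of_mem_erase he) heU
    · rintro rfl
      exact ⟨hvcE', hvcU⟩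
  have hadj : (flipGraph n).Adj U U' := by
    refine ⟨?_, ?_, ?_⟩
    · intro h
      have : ({a, b} : Finset (Fin n)) ∈ U'.edges := h ▸ hab
      exact habE' this
    · rw [hd1]; exact Finset.card_singleton _
    · rw [hd2]; exact Finset.card_singleton _
  have hab_not_fan : ({a, b} : Finset (Fin n)) ∉ fan n v := by
    rw [mem_fan]
    rintro ⟨-, hor⟩
    rcases hor with hv | hb'
    · exact hvab hv
    · rw [isBoundary_pair_iff (by omega)] at hb'
      have e3 : b - a = (b - v) - (a - v) := (sub_sub_sub_cancel_right b a v).symm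
      have e4 : a - b = (a - v) - (b - v) := (sub_sub_sub_cancel_right a b v).symm
      rw [e3, e4, fin_sub_val (b - v) (a - v), fin_sub_val (a - v) (b - v), hOa, hOb] at hb'
      rcases hb' with h | h
      · rw [if_pos (by omega)] at h; omega
      · rw [if_neg (by omega)] at h; omega
  have hssub : (fan n v \ U'.edges) ⊂ (fan n v \ U.edges) := by
    constructor
    · intro e he
      rw [Finset.mem_sdiff] at he ⊢
      refine ⟨he.1, fun heU => ?_⟩
      have hne' : e ≠ ({a, b} : Finset (Fin n)) := fun h => hab_not_fan (h ▸ he.1)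
      exact he.2 (hmemE' e heU hne')
    · intro hsub
      have h1 : ({v, c} : Finset (Fin n)) ∈ fan n v \ U.edges := by
        rw [Finset.mem_sdiff, mem_fan]
        exact ⟨⟨hvc_card, Or.inl (Finset.mem_insert_self _ _)⟩, hvcU⟩
      have h2 := hsub h1
      rw [Finset.mem_sdiff] at h2
      exact h2.2 hvcE'
  exact ⟨U', hadj, hssub⟩

noncomputable def fanT (n : ℕ) (hn : 4 ≤ n) (v : Fin n) : Triangulation n :=
  ⟨fan n v, fan_isTri hn v⟩

lemma fan_eq_of_subset {n : ℕ} (hn : 4 ≤ n) (v : Fin n) (U : Triangulation n)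
    (h : fan n v ⊆ U.edges) : fanT n hn v = U := by
  apply Triangulation.edges_injective
  show fan n v = U.edges
  refine Finset.Subset.antisymm h (fun e he => ?_)
  exact (fan_isTri hn v).2.2.2 e (Finset.subset_univ _) (U.isTri.2.1 e he)
    (fun f hf => U.isTri.2.2.1 e he f (h hf))

lemma walk_to_fan {n : ℕ} (hn : 4 ≤ n) (v : Fin n) :
    ∀ m : ℕ, ∀ U : Triangulation n, (fan n v \ U.edges).card ≤ m →
      ∃ p : (flipGraph n).Walk (fanT n hn v) U, p.length ≤ (fan n v \ U.edges).card := by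
  intro m
  induction m with
  | zero =>
    intro U hU
    have hsub : fan n v ⊆ U.edges := by
      intro e he
      by_contra hne
      have : e ∈ fan n v \ U.edges := Finset.mem_sdiff.mpr ⟨he, hne⟩
      have := Finset.card_pos.mpr ⟨e, this⟩
      omega
    obtain rfl := fan_eq_of_subset hn v U hsub
    exact ⟨SimpleGraph.Walk.nil, by simp⟩
  | succ m ih =>
    intro U hU
    rcases Nat.eq_zero_or_pos (fan n v \ U.edges).card with h0 | hpos
    · have hsub : fan n v ⊆ U.edges := by
        intro e he
        by_contra hne
        have : e ∈ fan n v \ U.edges := Finset.mem_sdiff.mpr ⟨he, hne⟩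
        have := Finset.card_pos.mpr ⟨e, this⟩
        omega
      obtain rfl := fan_eq_of_subset hn v U hsub
      exact ⟨SimpleGraph.Walk.nil, by simp⟩
    · obtain ⟨U', hadj, hss⟩ := flip_step hn v U (Finset.card_pos.mp hpos)
      have hlt : (fan n v \ U'.edges).card < (fan n v \ U.edges).card :=
        Finset.card_lt_card hss
      obtain ⟨p', hp'⟩ := ih U' (by omega)
      refine ⟨p'.concat hadj.symm, ?_⟩
      rw [SimpleGraph.Walk.length_concat]
      omega

lemma dist_fan_le {n : ℕ} (hn : 4 ≤ n) (v : Fin n) (U : Triangulation n) :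
    (flipGraph n).dist (fanT n hn v) U ≤ n - 3 := by
  obtain ⟨p, hp⟩ := walk_to_fan hn v (fan n v \ U.edges).card U le_rfl
  have h1 := SimpleGraph.dist_le p
  have h2 : (fan n v \ U.edges).card ≤ n - 3 := by
    have := Finset.card_le_card (fan_sdiff_subset_fanInt hn v U)
    rw [fanInt_card hn v] at this
    exact this
  omega

lemma reachable_fan {n : ℕ} (hn : 4 ≤ n) (v : Fin n) (U : Triangulation n) :
    (flipGraph n).Reachable (fanT n hn v) U := by
  obtain ⟨p, -⟩ := walk_to_fan hn v (fan n v \ U.edges).card U le_rfl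
  exact ⟨p⟩

lemma ecc_fan {n : ℕ} (hn : 4 ≤ n) (v : Fin n) :
    eccentricity n (fanT n hn v) = n - 3 := by
  haveI : NeZero n := ⟨by omega⟩
  apply le_antisymm
  · exact Finset.sup_le (fun U _ => dist_fan_le hn v U)
  · -- the fan at the next vertex is at distance at least n - 3
    obtain ⟨w, hOw⟩ : ∃ w : Fin n, (w - v).val = 1 := ⟨v + ⟨1, by omega⟩, off_add v _⟩
    set U₀ := fanT n hn w with hU₀
    have hr := reachable_fan hn v U₀
    obtain ⟨q, hq⟩ := hr.exists_walk_length_eq_dist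
    have hle := sdiff_card_le_walk q
    have hsub : fanInt n v ⊆ (fanT n hn v).edges \ U₀.edges := fanInt_subset hn v w hOw
    have hcard := Finset.card_le_card hsub
    rw [fanInt_card hn v] at hcard
    have hdist : n - 3 ≤ (flipGraph n).dist (fanT n hn v) U₀ := by omega
    calc n - 3 ≤ (flipGraph n).dist (fanT n hn v) U₀ := hdist
      _ ≤ eccentricity n (fanT n hn v) := Finset.le_sup (Finset.mem_univ U₀)

theorem stmt9' (n : ℕ) (hn : 4 ≤ n) (T : Triangulation n) (v : Fin n)
    (hcomb : ∀ e ∈ T.edges, ¬ IsBoundary n e → v ∈ e) :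
    eccentricity n T = n - 3 := by
  have hT : fanT n hn v = T :=
    (Triangulation.edges_injective n (comb_eq_fan hn T v hcomb)).symm
  rw [← hT]
  exact ecc_fan hn v

end Stmt9

/-- A comb, that is a triangulation all of whose interior edges are
incident to a single vertex, has eccentricity exactly `n - 3` in the flip-graph. -/
theorem stmt9 (n : ℕ) (hn : 4 ≤ n) (T : Triangulation n) (v : Fin n)
    (hcomb : ∀ e ∈ T.edges, ¬ IsBoundary n e → v ∈ e) :
    eccentricity n T = n - 3 := by
  exact Stmt9.stmt9' n hn T v hcomb
end

section
/- Let T be a triangulation of a convex polygon π and let (a,b) be an oriented edge on π such that {a,b} is an edge of T. If (a,b) has length at least 2, then T has an ear in some vertex of π on the left of (a,b). -/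
namespace Aux10
variable {n : ℕ}
open Fin.CommRing

lemma val_sub_lt [NeZero n] {u v : Fin n} (h : u.val < v.val) :
    (u - v).val = u.val + n - v.val := by
  rw [Fin.sub_def]
  have h2 := v.isLt
  have hlt : (n - v.val + u.val) < n := by omega
  show (n - v.val + u.val) % n = _
  rw [Nat.mod_eq_of_lt hlt]; omega

lemma val_one (hn : 3 ≤ n) [NeZero n] : (1 : Fin n).val = 1 := by
  have : (1 : Fin n).val = 1 % n := rfl
  rw [this]; exact Nat.mod_eq_of_lt (by omega)

lemma val_two (hn : 3 ≤ n) [NeZero n] : (2 : Fin n).val = 2 := by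
  have : (2 : Fin n).val = 2 % n := rfl
  rw [this]; exact Nat.mod_eq_of_lt (by omega)

lemma nextV_eq [NeZero n] (i : Fin n) : nextV n i = i + 1 := by
  apply Fin.ext
  rw [Fin.val_add, show (1 : Fin n).val = 1 % n from rfl, Nat.add_mod_mod]
  rfl

lemma sub_cancel [NeZero n] {u v x : Fin n} (h : u - x = v - x) : u = v := by
  have := congrArg (· + x) h; simpa using this

lemma coord_sub [NeZero n] (x p q : Fin n) (h : (p - x).val ≤ (q - x).val) :
    (q - p).val = (q - x).val - (p - x).val := by
  rw [show q - p = (q - x) - (p - x) by ring, Fin.sub_val_of_le h]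

lemma coord_sub' [NeZero n] (x p q : Fin n) (h : (q - x).val < (p - x).val) :
    (q - p).val = (q - x).val + n - (p - x).val := by
  rw [show q - p = (q - x) - (p - x) by ring, val_sub_lt h]

lemma coord_add [NeZero n] (x p c : Fin n) (h : (c - p).val + (p - x).val < n) :
    (c - x).val = (c - p).val + (p - x).val := by
  rw [show c - x = (c - p) + (p - x) by ring, Fin.val_add]
  exact Nat.mod_eq_of_lt h

lemma pair_of_mem (e : Finset (Fin n)) (h2 : e.card = 2) {v : Fin n} (hv : v ∈ e) :
    ∃ d, d ≠ v ∧ e = {v, d} := by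
  obtain ⟨a, b, hab, rfl⟩ := Finset.card_eq_two.mp h2
  rcases Finset.mem_insert.mp hv with rfl | hb
  · exact ⟨b, hab.symm, rfl⟩
  · have : v = b := by simpa using hb
    subst this
    exact ⟨a, hab, by rw [Finset.pair_comm]⟩

lemma main (n : ℕ) (hn : 3 ≤ n) (T : Triangulation n) :
    ∀ m, 2 ≤ m → ∀ x y : Fin n, ({x, y} : Finset (Fin n)) ∈ T.edges → (y - x).val = m →
    ∃ c, Between n x c y ∧ HasEar n T c := by
  haveI : NeZero n := ⟨by omega⟩
  intro m
  induction m using Nat.strong_induction_on with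
  | _ m IH =>
  intro hm x y hxy hyx
  have hmn : m < n := hyx ▸ (y - x).isLt
  by_cases H : ∃ p q : Fin n, ({p, q} : Finset (Fin n)) ∈ T.edges ∧
      (p - x).val < (q - x).val ∧ (q - x).val ≤ m ∧
      2 ≤ (q - x).val - (p - x).val ∧ (q - x).val - (p - x).val < m
  · obtain ⟨p, q, hpq, hlt, hle, h2, hlt'⟩ := H
    have hsub : (q - p).val = (q - x).val - (p - x).val := coord_sub x p q hlt.le
    obtain ⟨c, hc, hear⟩ := IH _ (by omega) (by omega) p q hpq hsub
    obtain ⟨hc1, hc2⟩ := hc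
    rw [hsub] at hc2
    have hcx : (c - x).val = (c - p).val + (p - x).val := coord_add x p c (by omega)
    exact ⟨c, ⟨by omega, by omega⟩, hear⟩
  · push_neg at H
    have hx1 : ((x + 1) - x).val = 1 := by
      rw [show x + 1 - x = 1 by ring, val_one hn]
    refine ⟨x + 1, ⟨by omega, by omega⟩, ?_⟩
    intro e he hbd hce
    obtain ⟨d, hd, rfl⟩ := pair_of_mem e (T.isTri.2.1 e he) hce
    set w := (d - x).val with hw
    have hwn : w < n := (d - x).isLt
    rcases show w = 0 ∨ w = 1 ∨ w = 2 ∨ (3 ≤ w ∧ w ≤ m) ∨ m < w by omega with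
      h0 | h1 | h2 | ⟨h3, hle⟩ | hgt
    · -- d = x, boundary edge {x, x+1}
      have hdx : d = x := by
        have : d - x = x - x := Fin.ext (by rw [← hw, h0, show x - x = 0 by ring]; rfl)
        exact sub_cancel this
      subst hdx
      exact hbd ⟨d, by rw [nextV_eq, Finset.pair_comm]⟩
    · -- d = x + 1, contradiction with hd
      have : d - x = (x + 1) - x := Fin.ext (by rw [← hw, h1, hx1])
      exact hd (sub_cancel this)
    · -- d = x + 2, boundary edge {x+1, x+2}
      have hdx : d = x + 2 := by
        have : d - x = (x + 2) - x := by
          apply Fin.ext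
          rw [← hw, h2, show x + 2 - x = 2 by ring, val_two hn]
        exact sub_cancel this
      subst hdx
      exact hbd ⟨x + 1, by rw [nextV_eq, show x + 1 + 1 = x + 2 by ring]⟩
    · -- nested shorter chord, contradicts H
      have hdiff : w - ((x + 1) - x).val = w - 1 := by rw [hx1]
      have := H (x + 1) d he (by omega) hle (by omega)
      omega
    · -- {x+1, d} crosses {x, y}
      exfalso
      refine T.isTri.2.2.1 {x, y} hxy {x + 1, d} he
        ⟨x, y, x + 1, d, rfl, rfl, ⟨by omega, by omega⟩, ?_, ?_⟩
      · -- 0 < (d - y).val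
        have : (d - y).val = w - m := by
          rw [coord_sub x y d (by omega)]; omega
        omega
      · -- (d - y).val < (x - y).val
        have h1 : (d - y).val = w - m := by
          rw [coord_sub x y d (by omega)]; omega
        have h2 : (x - y).val = n - m := by
          have hxx : (x - x).val = 0 := by rw [show x - x = 0 by ring]; rfl
          rw [coord_sub' x y x (by omega)]; omega
        omega

end Aux10


/-- If `{a,b}` is an edge of `T` and the oriented edge `(a,b)` has
length at least `2`, then `T` has an ear in a vertex on the left of `(a,b)`. -/
theorem stmt10 (n : ℕ) (hn : 3 ≤ n) (T : Triangulation n) (a b : Fin n)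
    (hab : ({a, b} : Finset (Fin n)) ∈ T.edges)
    (hlen : 2 ≤ (b - a).val) :
    ∃ c : Fin n, Between n a c b ∧ HasEar n T c := by
  exact Aux10.main n hn T _ hlen a b hab rfl
end

section
/- Every triangulation of a convex polygon admits at least one clockwise-oriented central triangle. -/
section CentralHelpers

variable {n : ℕ}

private lemma ct_sub_val (x y : Fin n) :
    (x - y).val = if y.val ≤ x.val then x.val - y.val else x.val + n - y.val := by
  have hx := x.isLt
  have hy := y.isLt
  rw [Fin.sub_def]
  show (n - y.val + x.val) % n = _
  split_ifs with h
  · have hxy : n - y.val + x.val = (x.val - y.val) + n := by omega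
    rw [hxy, Nat.add_mod_right, Nat.mod_eq_of_lt (by omega)]
  · rw [Nat.mod_eq_of_lt (by omega)]; omega

private lemma ct_btw_sum {x y z : Fin n} (h : Between n x y z) :
    (y - x).val + (z - y).val = (z - x).val := by
  have hx := x.isLt; have hy := y.isLt; have hz := z.isLt
  simp only [Between, ct_sub_val] at *
  split_ifs at * <;> omega

private lemma ct_sub_rev {x y : Fin n} (h : x.val ≠ y.val) :
    (x - y).val + (y - x).val = n := by
  have hx := x.isLt; have hy := y.isLt
  simp only [ct_sub_val] at *
  split_ifs at * <;> omega

private lemma ct_btw_mono {a c x b : Fin n} (h1 : Between n a c b) (h2 : Between n c x b) :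
    Between n a x b ∧ (c - a).val < (x - a).val ∧ Between n c x a := by
  have ha := a.isLt; have hb := b.isLt; have hc := c.isLt; have hx := x.isLt
  simp only [Between, ct_sub_val] at *
  split_ifs at * <;> omega

private lemma ct_btw_tri {a b c y : Fin n} (h1 : Between n a c b) (h2 : Between n b y c)
    (hy : y.val ≠ a.val) : Between n b y a ∨ Between n a y c := by
  have ha := a.isLt; have hb := b.isLt; have hc := c.isLt; have hyl := y.isLt
  simp only [Between, ct_sub_val] at *
  split_ifs at * <;> omega

private lemma ct_pair_eq {α : Type*} [DecidableEq α] {a b c d : α}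
    (h : ({a, b} : Finset α) = {c, d}) (hab : a ≠ b) :
    (a = c ∧ b = d) ∨ (a = d ∧ b = c) := by
  have ha : a ∈ ({c, d} : Finset α) := by rw [← h]; simp
  have hb : b ∈ ({c, d} : Finset α) := by rw [← h]; simp
  simp only [Finset.mem_insert, Finset.mem_singleton] at ha hb
  rcases ha with ha | ha <;> rcases hb with hb | hb
  · exact absurd (ha.trans hb.symm) hab
  · exact Or.inl ⟨ha, hb⟩
  · exact Or.inr ⟨ha, hb⟩
  · exact absurd (ha.trans hb.symm) hab

/-- Every boundary edge belongs to every triangulation. -/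
private lemma ct_bdry [NeZero n] (hn : 3 ≤ n) (T : Triangulation n) (i : Fin n) :
    ({i, i + 1} : Finset (Fin n)) ∈ T.edges := by
  have hone : ((i + 1) - i).val = 1 := by
    rw [add_sub_cancel_left, Fin.val_one', Nat.mod_eq_of_lt (by omega)]
  have hne : i ≠ i + 1 := by
    intro h
    have h0 : i + 1 - i = 0 := by rw [← h, sub_self]
    rw [h0, Fin.val_zero] at hone
    exact absurd hone (by omega)
  apply T.isTri.2.2.2 _ (Finset.subset_univ _) (Finset.card_pair hne)
  intro f hf hcr
  obtain ⟨p, q, r, s, hpq, hrs, h1, h2⟩ := hcr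
  rcases ct_pair_eq hpq hne with ⟨hp, hq⟩ | ⟨hp, hq⟩
  · subst hp; subst hq
    have ha := h1.1
    have hb := h1.2
    rw [hone] at hb
    omega
  · subst hp; subst hq
    have ha := h2.1
    have hb := h2.2
    rw [hone] at hb
    omega

/-- Apex lemma: every edge of a triangulation whose clockwise arc has length at
least two has a triangle of the triangulation on that side. -/
private lemma ct_apex [NeZero n] (hn : 3 ≤ n) (T : Triangulation n) (a b : Fin n)
    (hab : ({a, b} : Finset (Fin n)) ∈ T.edges) (hd : 2 ≤ (b - a).val) :
    ∃ c, Between n a c b ∧ ({a, c} : Finset (Fin n)) ∈ T.edges ∧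
      ({c, b} : Finset (Fin n)) ∈ T.edges := by
  classical
  set S : Finset (Fin n) :=
    Finset.univ.filter (fun c => Between n a c b ∧ ({a, c} : Finset (Fin n)) ∈ T.edges) with hS
  have hone : ((a + 1) - a).val = 1 := by
    rw [add_sub_cancel_left, Fin.val_one', Nat.mod_eq_of_lt (by omega)]
  have hmemS : a + 1 ∈ S := by
    rw [hS, Finset.mem_filter]
    exact ⟨Finset.mem_univ _, ⟨by rw [hone]; omega, by rw [hone]; omega⟩, ct_bdry hn T a⟩
  obtain ⟨c, hcS, hcmax⟩ := S.exists_max_image (fun c => (c - a).val) ⟨_, hmemS⟩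
  rw [hS, Finset.mem_filter] at hcS
  obtain ⟨-, hacb, hacT⟩ := hcS
  refine ⟨c, hacb, hacT, ?_⟩
  have hcb : c ≠ b := by
    intro h; subst h; exact absurd hacb.2 (lt_irrefl _)
  apply T.isTri.2.2.2 _ (Finset.subset_univ _) (Finset.card_pair hcb)
  intro f hf hcr
  obtain ⟨p, q, r, s, hpq, hrs, h1, h2⟩ := hcr
  -- normalize: x strictly between c and b, y strictly between b and c, f = {x, y}
  obtain ⟨x, y, hfxy, hx, hy⟩ :
      ∃ x y, f = ({x, y} : Finset (Fin n)) ∧ Between n c x b ∧ Between n b y c := by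
    rcases ct_pair_eq hpq hcb with ⟨hp, hq⟩ | ⟨hp, hq⟩
    · subst hp; subst hq; exact ⟨r, s, hrs, h1, h2⟩
    · subst hp; subst hq
      exact ⟨s, r, by rw [hrs, Finset.pair_comm], h2, h1⟩
  obtain ⟨haxb, hlt, hcxa⟩ := ct_btw_mono hacb hx
  by_cases hya : y = a
  · -- f = {x, a} gives a bigger element of S, contradiction
    subst hya
    have hxS : x ∈ S := by
      rw [hS, Finset.mem_filter]
      refine ⟨Finset.mem_univ _, haxb, ?_⟩
      rw [Finset.pair_comm]
      rwa [hfxy] at hf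
    exact absurd (hcmax x hxS) (by omega)
  · have hyv : y.val ≠ a.val := fun h => hya (Fin.ext h)
    rcases ct_btw_tri hacb hy hyv with h | h
    · -- f crosses {a, b}
      exact T.isTri.2.2.1 _ hab f hf ⟨a, b, x, y, rfl, hfxy, haxb, h⟩
    · -- f crosses {a, c}
      exact T.isTri.2.2.1 _ hacT f hf
        ⟨a, c, y, x, rfl, by rw [hfxy, Finset.pair_comm], h, hcxa⟩

private lemma ct_rec (n : ℕ) (hn : 3 ≤ n) (T : Triangulation n) :
    ∀ m : ℕ, ∀ a b : Fin n, ({a, b} : Finset (Fin n)) ∈ T.edges → 0 < (b - a).val →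
      2 * (b - a).val ≤ n → (a - b).val ≤ m →
      ∃ x y z, CentralTriangle n T x y z := by
  intro m
  induction m using Nat.strong_induction_on with
  | _ m ih =>
    intro a b hab hd hd2 hm
    haveI : NeZero n := ⟨by omega⟩
    have hvne : b.val ≠ a.val := by
      intro h
      have : b = a := Fin.ext h
      subst this
      simp [sub_self] at hd
    have hrev : (b - a).val + (a - b).val = n := ct_sub_rev hvne
    have hab2 : 2 ≤ (a - b).val := by omega
    obtain ⟨c, hbca, hbc, hca⟩ := ct_apex hn T b a (by rwa [Finset.pair_comm]) hab2
    have hsum : (c - b).val + (a - c).val = (a - b).val := ct_btw_sum hbca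
    have hp0 : 0 < (c - b).val := hbca.1
    have hq0 : 0 < (a - c).val := by
      have := hbca.2
      omega
    by_cases h1 : 2 * (c - b).val ≤ n
    · by_cases h2 : 2 * (a - c).val ≤ n
      · exact ⟨a, b, c, hd2, h1, h2, hab, hbc, by rwa [Finset.pair_comm] at hca⟩
      · -- recurse on the edge (a, c)
        have hacv : a.val ≠ c.val := by
          intro h
          have : a = c := Fin.ext h
          subst this
          simp [sub_self] at hq0
        have hrev2 : (a - c).val + (c - a).val = n := ct_sub_rev hacv
        refine ih (a - c).val (by omega) a c (by rwa [Finset.pair_comm] at hca) (by omega)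
          (by omega) le_rfl
    · -- recurse on the edge (c, b)
      have hcbv : c.val ≠ b.val := by
        intro h
        have : c = b := Fin.ext h
        subst this
        simp [sub_self] at hp0
      have hrev2 : (c - b).val + (b - c).val = n := ct_sub_rev hcbv
      refine ih (c - b).val (by omega) c b (by rwa [Finset.pair_comm] at hbc) (by omega)
        (by omega) le_rfl

end CentralHelpers

/-- Every triangulation of a convex polygon admits at least one
clockwise-oriented central triangle. -/
theorem stmt12 (n : ℕ) (hn : 3 ≤ n) (T : Triangulation n) :
    ∃ a b c : Fin n, CentralTriangle n T a b c := by
  haveI : NeZero n := ⟨by omega⟩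
  set a : Fin n := ⟨0, by omega⟩ with ha
  have hone : ((a + 1) - a).val = 1 := by
    rw [add_sub_cancel_left, Fin.val_one', Nat.mod_eq_of_lt (by omega)]
  exact ct_rec n hn T n a (a + 1) (ct_bdry hn T a) (by omega) (by omega)
    (le_of_lt (Fin.isLt _))
end
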